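/- Let n ≥ 1, α > 0, and consider the Gauss curvature power translator ODE v' = r^{n-1} (1+v²)^{(n+2)/2 - n/(2α)} / v^{n-1} with v(0)=0, v > 0 for r > 0. If α/n ≤ 1/2 then any positive solution on (0,R) with bounded initial data extends to all r > 0 (i.e. v does not blow up in finite r). -/

import Mathlib

/-- Subcritical Gauss curvature power flows (α/n ≤ 1/2): positive solutions of the
translator ODE stay bounded on bounded intervals (no finite-r blow-up). -/
theorem stmt10 (n : ℕ) (hn : 1 ≤ n) (α : ℝ) (hα : 0 < α) (hsub : α / n ≤ 1 / 2)
    (r₀ R : ℝ) (hr₀ : 0 < r₀) (hR : r₀ < R) (v : ℝ → ℝ)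
    (hpos : ∀ r ∈ Set.Ico r₀ R, 0 < v r)
    (hode : ∀ r ∈ Set.Ico r₀ R,
      HasDerivAt v
        (r ^ (n - 1) * (1 + (v r) ^ 2) ^ (((n : ℝ) + 2) / 2 - (n : ℝ) / (2 * α)) /
          (v r) ^ (n - 1)) r) :
    BddAbove (v '' Set.Ico r₀ R) := by
  have hnpos : (0 : ℝ) < n := by exact_mod_cast hn
  set p : ℝ := ((n : ℝ) + 2) / 2 - (n : ℝ) / (2 * α) with hp
  set F : ℝ → ℝ := fun r => r ^ (n - 1) * (1 + (v r) ^ 2) ^ p / (v r) ^ (n - 1) with hF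
  have hode' : ∀ r ∈ Set.Ico r₀ R, HasDerivAt v (F r) r := hode
  have hFpos : ∀ t ∈ Set.Ico r₀ R, 0 < F t := by
    intro t ht
    have hw : 0 < v t := hpos t ht
    have htpos : 0 < t := lt_of_lt_of_le hr₀ ht.1
    exact div_pos (mul_pos (pow_pos htpos _)
      (Real.rpow_pos_of_pos (by positivity) _)) (pow_pos hw _)
  have hcont : ContinuousOn v (Set.Ico r₀ R) := fun t ht =>
    ((hode' t ht).continuousAt).continuousWithinAt
  have hr₀mem : r₀ ∈ Set.Ico r₀ R := ⟨le_refl _, hR⟩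
  have hv₀ : 0 < v r₀ := hpos r₀ hr₀mem
  set v₀ := v r₀ with hv₀def
  -- monotonicity: v ≥ v₀ on the interval
  have hmono : StrictMonoOn v (Set.Ico r₀ R) := by
    apply strictMonoOn_of_deriv_pos (convex_Ico r₀ R) hcont
    intro x hx
    rw [interior_Ico] at hx
    have hx' : x ∈ Set.Ico r₀ R := ⟨le_of_lt hx.1, hx.2⟩
    rw [(hode' x hx').deriv]
    exact hFpos x hx'
  have hge : ∀ t ∈ Set.Ico r₀ R, v₀ ≤ v t := by
    intro t ht
    rcases eq_or_lt_of_le ht.1 with h | h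
    · rw [← h]
    · exact le_of_lt (hmono hr₀mem ht h)
  set c : ℝ := 1 + 1 / v₀ with hc
  have hc1 : (1 : ℝ) ≤ c := by
    have h : 0 < 1 / v₀ := by positivity
    rw [hc]; linarith
  have hc0 : 0 < c := lt_of_lt_of_le one_pos hc1
  have hRpos : 0 < R := lt_trans hr₀ hR
  set K : ℝ := R ^ (n - 1) * c ^ n with hK
  have hK0 : 0 ≤ K := by positivity
  have hpn : p ≤ (n : ℝ) / 2 := by
    have h2a : (1 : ℝ) ≤ (n : ℝ) / (2 * α) := by
      rw [le_div_iff₀ (by positivity)]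
      rw [div_le_div_iff₀ hnpos (by norm_num)] at hsub
      linarith
    rw [hp]; linarith
  have key : ∀ t ∈ Set.Ico r₀ R, F t ≤ K * v t := by
    intro t ht
    have hw : 0 < v t := hpos t ht
    set w := v t with hwdef
    have hwv : v₀ ≤ w := hge t ht
    have h1 : w + 1 ≤ c * w := by
      have : (1 : ℝ) ≤ w / v₀ := (one_le_div hv₀).mpr hwv
      have h2 : w / v₀ * v₀ = w := div_mul_cancel₀ w (ne_of_gt hv₀)
      calc w + 1 ≤ w + w / v₀ := by nlinarith
        _ = c * w := by field_simp [hc]; rw [hc, mul_add, mul_one_div_cancel (ne_of_gt hv₀)]; ring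
    have h2 : 1 + w ^ 2 ≤ (c * w) ^ 2 := by nlinarith [hw, h1]
    have h3 : (1 + w ^ 2) ^ p ≤ (1 + w ^ 2) ^ ((n : ℝ) / 2) :=
      Real.rpow_le_rpow_of_exponent_le (by nlinarith) hpn
    have h4 : (1 + w ^ 2) ^ ((n : ℝ) / 2) ≤ ((c * w) ^ 2) ^ ((n : ℝ) / 2) :=
      Real.rpow_le_rpow (by positivity) h2 (by positivity)
    have h5 : (((c * w) ^ 2 : ℝ)) ^ ((n : ℝ) / 2) = c ^ n * w ^ n := by
      rw [← Real.rpow_natCast (c * w) 2, ← Real.rpow_mul (by positivity)]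
      have h2n : ((2 : ℕ) : ℝ) * ((n : ℝ) / 2) = ((n : ℕ) : ℝ) := by push_cast; ring
      rw [h2n, Real.rpow_natCast, mul_pow]
    have hnum : (1 + w ^ 2) ^ p ≤ c ^ n * w ^ n := by
      calc (1 + w ^ 2) ^ p ≤ ((c * w) ^ 2 : ℝ) ^ ((n : ℝ) / 2) := le_trans h3 h4
        _ = c ^ n * w ^ n := h5
    have htR : t ≤ R := le_of_lt ht.2
    have htpos : 0 < t := lt_of_lt_of_le hr₀ ht.1
    have step : t ^ (n - 1) * (1 + w ^ 2) ^ p / w ^ (n - 1)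
        ≤ R ^ (n - 1) * (c ^ n * w ^ n) / w ^ (n - 1) := by
      gcongr
    have hwn : w ^ n = w ^ (n - 1) * w := by
      rw [← pow_succ, Nat.sub_add_cancel hn]
    have heq : R ^ (n - 1) * (c ^ n * w ^ n) / w ^ (n - 1) = K * w := by
      rw [hwn, hK]
      field_simp
    rw [heq] at step
    exact le_trans (le_of_eq rfl) step
  -- Grönwall on every subinterval
  refine ⟨v₀ * Real.exp (K * (R - r₀)), ?_⟩
  rintro x ⟨r, hr, rfl⟩
  have hsub' : Set.Icc r₀ r ⊆ Set.Ico r₀ R := fun t ht => ⟨ht.1, lt_of_le_of_lt ht.2 hr.2⟩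
  have hgron := norm_le_gronwallBound_of_norm_deriv_right_le (f := v) (f' := F)
    (δ := v₀) (K := K) (ε := 0) (a := r₀) (b := r)
    (hcont.mono hsub')
    (fun t ht => (hode' t (hsub' ⟨ht.1, le_of_lt ht.2⟩)).hasDerivWithinAt)
    (by rw [Real.norm_eq_abs, abs_of_pos hv₀])
    (fun t ht => by
      have ht' : t ∈ Set.Ico r₀ R := hsub' ⟨ht.1, le_of_lt ht.2⟩
      rw [Real.norm_eq_abs, Real.norm_eq_abs, abs_of_pos (hFpos t ht'),
        abs_of_pos (hpos t ht'), add_zero]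
      exact key t ht')
    r ⟨hr.1, le_refl r⟩
  rw [Real.norm_eq_abs, abs_of_pos (hpos r hr), gronwallBound_ε0] at hgron
  calc v r ≤ v₀ * Real.exp (K * (r - r₀)) := hgron
    _ ≤ v₀ * Real.exp (K * (R - r₀)) := by
        have : K * (r - r₀) ≤ K * (R - r₀) := by
          apply mul_le_mul_of_nonneg_left _ hK0
          linarith [hr.2]
        exact mul_le_mul_of_nonneg_left (Real.exp_le_exp.mpr this) (le_of_lt hv₀)
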